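/- Let a be a nonzero color and consider the a/0-Kempe chain K_{a,0}(v₀, v_m) of a proper n-edge coloring of a signed graph. If the chain has a repeated vertex, then its first repeated vertex occurrence is its final vertex: if v_j = v_s with j < s and this is the first self-intersection along the trail, then s = m, i.e., the chain terminates at its first self-intersection. -/

import Mathlib

open SimpleGraph

/-- The signed color set `M_n`: for `n = 2k+1` it is `{0, ±1, …, ±k}`,
and for `n = 2k` it is `{±1, …, ±k}`. -/
def Mset (n : ℕ) : Set ℤ :=
  {a : ℤ | 2 * a.natAbs ≤ n ∧ (a = 0 → Odd n)}

/-- An `n`-edge coloring of the signed graph `(G, σ)`: an assignment of colors from `Mset n`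
to the incidences of `G` such that `γ(v,e) = -σ(e)·γ(w,e)` for each edge `e : vw`. -/
structure SColoring {V : Type*} (G : SimpleGraph V) (σ : Sym2 V → ℤ) (n : ℕ) where
  col : V → Sym2 V → ℤ
  mem_colors : ∀ ⦃v w : V⦄, G.Adj v w → col v s(v, w) ∈ Mset n
  compat : ∀ ⦃v w : V⦄, G.Adj v w → col v s(v, w) = -σ s(v, w) * col w s(v, w)

namespace SColoring

variable {V : Type*} {G : SimpleGraph V} {σ : Sym2 V → ℤ} {n : ℕ}

/-- A coloring is proper if distinct edges incident to a common vertex receive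
distinct colors at that vertex. -/
def Proper (c : SColoring G σ n) : Prop :=
  ∀ ⦃v w x : V⦄, G.Adj v w → G.Adj v x → w ≠ x → c.col v s(v, w) ≠ c.col v s(v, x)

/-- A coloring is zero-free if the color `0` is never used. -/
def ZeroFree (c : SColoring G σ n) : Prop :=
  ∀ ⦃v w : V⦄, G.Adj v w → c.col v s(v, w) ≠ 0

/-- The color `a` is absent at the vertex `v` if no edge incident to `v` is
colored `a` at `v`. -/
def Absent (c : SColoring G σ n) (a : ℤ) (v : V) : Prop :=
  ∀ ⦃w : V⦄, G.Adj v w → c.col v s(v, w) ≠ a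

end SColoring

/-- The defining properties of an `a/b`-Kempe trail of the coloring `c` starting at the
vertex `v₀` (where `a` is absent at `v₀` and the chain starts with a `b`-colored edge):
it is a trail whose edge-color magnitudes alternate `|b|, |a|, |b|, …`, and at each
interior vertex `v i` the two incident chain edges are colored `(-1)^{t_i}·a` and
`(-1)^{t_i}·b`, where `t_i` is the number of positive edges among the first `i` edges
of the trail. -/
def IsKempeTrail {V : Type*} {G : SimpleGraph V} {σ : Sym2 V → ℤ} {n : ℕ}
    (c : SColoring G σ n) (a b : ℤ) {v₀ vm : V} (W : G.Walk v₀ vm) : Prop :=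
  W.IsTrail ∧
  c.Absent a v₀ ∧
  (0 < W.length → c.col v₀ s(v₀, W.getVert 1) = b) ∧
  (∀ i < W.length,
    (c.col (W.getVert i) s(W.getVert i, W.getVert (i + 1))).natAbs =
      if Even i then b.natAbs else a.natAbs) ∧
  (∀ i, 0 < i → i < W.length →
    ({c.col (W.getVert i) s(W.getVert (i - 1), W.getVert i),
      c.col (W.getVert i) s(W.getVert i, W.getVert (i + 1))} : Set ℤ) =
    {(-1) ^ ((W.edges.take i).countP fun e => σ e == 1) * a,
     (-1) ^ ((W.edges.take i).countP fun e => σ e == 1) * b})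

/-- The `a/b`-Kempe chain `K_{a,b}(v₀, vm)`: a *maximal* `a/b`-Kempe trail. -/
def IsKempeChain {V : Type*} {G : SimpleGraph V} {σ : Sym2 V → ℤ} {n : ℕ}
    (c : SColoring G σ n) (a b : ℤ) {v₀ vm : V} (W : G.Walk v₀ vm) : Prop :=
  IsKempeTrail c a b W ∧
    ∀ ⦃x : V⦄ (h : G.Adj vm x), ¬IsKempeTrail c a b (W.concat h)


private lemma walk_edges_getElem {V : Type*} {G : SimpleGraph V} {u v : V}
    (W : G.Walk u v) (i : ℕ) (hi : i < W.length) :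
    W.edges[i]'(by simpa using hi) = s(W.getVert i, W.getVert (i + 1)) := by
  induction W generalizing i with
  | nil => simp at hi
  | cons h p ih =>
    cases i with
    | zero => simp [SimpleGraph.Walk.edges_cons, SimpleGraph.Walk.getVert]
    | succ m =>
      have hm : m < p.length := by simpa using hi
      simpa [SimpleGraph.Walk.edges_cons, SimpleGraph.Walk.getVert_cons_succ] using ih m hm

/-- An `a/0`-Kempe chain (with `a ≠ 0`) of a proper `n`-edge coloring terminates at its
first self-intersection: if `v j = v k` with `j < k` is the first self-intersection
along the trail, then `k` is the final index of the chain. -/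
theorem kempeChain_zero_terminates_at_first_self_intersection {V : Type*} [Fintype V]
    (G : SimpleGraph V) (σ : Sym2 V → ℤ) (hσ : ∀ e ∈ G.edgeSet, σ e = 1 ∨ σ e = -1)
    (n : ℕ) (c : SColoring G σ n) (hc : c.Proper)
    (a : ℤ) (ha : a ∈ Mset n) (ha0 : a ≠ 0) (h0 : (0 : ℤ) ∈ Mset n) {v₀ vm : V}
    (hzpres : ∃ w : V, G.Adj v₀ w ∧ c.col v₀ s(v₀, w) = 0)
    (W : G.Walk v₀ vm) (hW : IsKempeChain c a 0 W)
    (j k : ℕ) (hjk : j < k) (hk : k ≤ W.length)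
    (hrep : W.getVert j = W.getVert k)
    (hfirst : ∀ p q : ℕ, p < q → q < k → W.getVert p ≠ W.getVert q) :
    k = W.length := by

  -- Suppose for contradiction the chain continues past the self-intersection.
  by_contra hne
  have hklen : k < W.length := lt_of_le_of_ne hk hne
  obtain ⟨⟨ht, habs, hstart, hmag, hint⟩, _⟩ := hW
  -- distinct-index edges of a trail are distinct
  have hedne : ∀ i₁ i₂ : ℕ, i₁ < W.length → i₂ < W.length → i₁ ≠ i₂ →
      s(W.getVert i₁, W.getVert (i₁ + 1)) ≠ s(W.getVert i₂, W.getVert (i₂ + 1)) := by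
    intro i₁ i₂ h₁ h₂ hne12 he
    rw [← walk_edges_getElem W i₁ h₁, ← walk_edges_getElem W i₂ h₂] at he
    exact hne12 ((ht.edges_nodup.getElem_inj_iff).1 he)
  have hkpos : 0 < k := by omega
  -- j + 1 < k, else v_j adjacent to itself
  have hjk1 : j + 1 < k := by
    rcases lt_or_eq_of_le (Nat.succ_le_of_lt hjk) with h | h
    · exact h
    · exfalso
      have hadj := W.adj_getVert_succ (show j < W.length from lt_of_lt_of_le hjk hk)
      rw [show j + 1 = k from h, ← hrep] at hadj
      exact G.loopless.irrefl _ hadj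
  -- zero-colored edge at the k-side
  have hzk : ∃ i w, (i + 1 = k ∨ i = k) ∧ G.Adj (W.getVert k) w ∧
      s(W.getVert k, w) = s(W.getVert i, W.getVert (i + 1)) ∧
      c.col (W.getVert k) s(W.getVert k, w) = 0 := by
    have hset := hint k hkpos hklen
    have h0mem : (0 : ℤ) ∈ ({c.col (W.getVert k) s(W.getVert (k - 1), W.getVert k),
        c.col (W.getVert k) s(W.getVert k, W.getVert (k + 1))} : Set ℤ) := by
      rw [hset]; right; simp
    rw [Set.mem_insert_iff, Set.mem_singleton_iff, eq_comm, @eq_comm _ (0:ℤ)] at h0mem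
    have hk1 : k - 1 + 1 = k := Nat.succ_pred_eq_of_pos hkpos
    rcases h0mem with h0e | h0e
    · refine ⟨k - 1, W.getVert (k - 1), Or.inl hk1, ?_, ?_, ?_⟩
      · have := W.adj_getVert_succ (show k - 1 < W.length by omega)
        rw [hk1] at this; exact this.symm
      · rw [hk1, Sym2.eq_swap]
      · rw [show s(W.getVert k, W.getVert (k-1)) = s(W.getVert (k-1), W.getVert k) from
          Sym2.eq_swap]
        exact h0e
    · exact ⟨k, W.getVert (k + 1), Or.inr rfl, W.adj_getVert_succ hklen, rfl, h0e⟩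
  -- zero-colored edge at the j-side
  have hzj : ∃ i w, i ≤ j ∧ G.Adj (W.getVert j) w ∧
      s(W.getVert j, w) = s(W.getVert i, W.getVert (i + 1)) ∧
      c.col (W.getVert j) s(W.getVert j, w) = 0 := by
    rcases Nat.eq_zero_or_pos j with hj0 | hjpos
    · subst hj0
      have h0len : 0 < W.length := lt_of_le_of_lt (Nat.zero_le k) hklen
      have hm := hmag 0 h0len
      simp only [if_pos (Even.zero)] at hm
      have hc0 : c.col (W.getVert 0) s(W.getVert 0, W.getVert 1) = 0 := by
        simpa [Int.natAbs_eq_zero] using hm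
      exact ⟨0, W.getVert 1, le_refl 0, W.adj_getVert_succ h0len, by norm_num, hc0⟩
    · have hjlen : j < W.length := lt_of_lt_of_le hjk hk
      have hset := hint j hjpos hjlen
      have h0mem : (0 : ℤ) ∈ ({c.col (W.getVert j) s(W.getVert (j - 1), W.getVert j),
          c.col (W.getVert j) s(W.getVert j, W.getVert (j + 1))} : Set ℤ) := by
        rw [hset]; right; simp
      rw [Set.mem_insert_iff, Set.mem_singleton_iff, eq_comm, @eq_comm _ (0:ℤ)] at h0mem
      have hj1 : j - 1 + 1 = j := Nat.succ_pred_eq_of_pos hjpos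
      rcases h0mem with h0e | h0e
      · refine ⟨j - 1, W.getVert (j - 1), Nat.sub_le j 1, ?_, ?_, ?_⟩
        · have := W.adj_getVert_succ (show j - 1 < W.length by omega)
          rw [hj1] at this; exact this.symm
        · rw [hj1, Sym2.eq_swap]
        · rw [show s(W.getVert j, W.getVert (j-1)) = s(W.getVert (j-1), W.getVert j) from
            Sym2.eq_swap]
          exact h0e
      · exact ⟨j, W.getVert (j + 1), le_refl j, W.adj_getVert_succ hjlen, rfl, h0e⟩
  obtain ⟨ik, wk, hik, hadjk, hek, hcolk⟩ := hzk
  obtain ⟨ij, wj, hij, hadjj, hej, hcolj⟩ := hzj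
  -- the two zero edges are distinct (their indices differ)
  have hikne : ij ≠ ik := by omega
  have hijlt : ij < W.length := by omega
  have hiklt : ik < W.length := by omega
  have hwne : wj ≠ wk := by
    intro hww
    apply hedne ij ik hijlt hiklt hikne
    rw [← hej, ← hek, hrep, hww]
  have := hc (hrep ▸ hadjj) hadjk hwne
  rw [hrep] at hcolj
  exact this (hcolj.trans hcolk.symm)
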